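/- Let ψ : [0,1) → [0,∞) be integrable with lim_{x↑1} ψ(x) = ψ₁ ∈ (0,∞), and let λ > 0. Then for fixed positive reals t₁, t₂, the quantity (λ/(n log n)) · ∫_0^1 ∑_{k=1}^{⌊n t₁⌋} ∑_{ℓ=1}^{⌊n t₂⌋} a^{|k-ℓ|} ψ(a) da converges to 2 λ ψ₁ min(t₁, t₂) as n → ∞. -/

import Mathlib

open Finset

noncomputable def dsum (f : ℕ → ℝ) (K L : ℕ) : ℝ :=
  ∑ k ∈ Finset.Icc 1 K, ∑ ℓ ∈ Finset.Icc 1 L, f ((k : ℤ) - ℓ).natAbs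

lemma dsum_comm (f : ℕ → ℝ) (K L : ℕ) : dsum f K L = dsum f L K := by
  unfold dsum
  rw [Finset.sum_comm]
  refine Finset.sum_congr rfl fun ℓ _ => Finset.sum_congr rfl fun k _ => ?_
  congr 1
  omega

lemma geomAux {a : ℝ} (h0 : 0 ≤ a) (h1 : a < 1) (n : ℕ) :
    ∑ j ∈ range n, a ^ j ≤ 1 / (1 - a) := by
  have h : 0 < 1 - a := by linarith
  rw [geom_sum_eq (by linarith) n]
  have e : (a ^ n - 1) / (a - 1) = (1 - a ^ n) / (1 - a) := by
    rw [← neg_div_neg_eq]; ring_nf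
  rw [e, div_le_div_iff₀ h h]
  have := pow_nonneg h0 n
  nlinarith

lemma inner_geom_le {a : ℝ} (h0 : 0 ≤ a) (h1 : a < 1) (k L : ℕ) :
    ∑ ℓ ∈ Icc 1 L, a ^ ((k : ℤ) - ℓ).natAbs ≤ 2 / (1 - a) := by
  classical
  have h : 0 < 1 - a := by linarith
  rw [← Finset.sum_filter_add_sum_filter_not (Icc 1 L) (fun ℓ => ℓ ≤ k)]
  have b1 : ∑ ℓ ∈ (Icc 1 L).filter (fun ℓ => ℓ ≤ k), a ^ ((k : ℤ) - ℓ).natAbs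
      ≤ 1 / (1 - a) := by
    have e1 : ∑ ℓ ∈ (Icc 1 L).filter (fun ℓ => ℓ ≤ k), a ^ ((k : ℤ) - ℓ).natAbs
        = ∑ j ∈ ((Icc 1 L).filter (fun ℓ => ℓ ≤ k)).image (fun ℓ => k - ℓ), a ^ j := by
      rw [Finset.sum_image (fun x hx y hy hxy => by
        simp only [Finset.mem_coe, mem_filter, mem_Icc] at hx hy; omega)]
      exact Finset.sum_congr rfl fun ℓ hℓ => by
        simp only [mem_filter, mem_Icc] at hℓ; congr 1; omega
    rw [e1]
    refine le_trans (Finset.sum_le_sum_of_subset_of_nonneg ?_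
      (fun i _ _ => pow_nonneg h0 i)) (geomAux h0 h1 (k + 1))
    intro j hj
    simp only [Finset.mem_image, mem_filter, mem_Icc] at hj
    simp only [Finset.mem_range]
    omega
  have b2 : ∑ ℓ ∈ (Icc 1 L).filter (fun ℓ => ¬ ℓ ≤ k), a ^ ((k : ℤ) - ℓ).natAbs
      ≤ 1 / (1 - a) := by
    have e2 : ∑ ℓ ∈ (Icc 1 L).filter (fun ℓ => ¬ ℓ ≤ k), a ^ ((k : ℤ) - ℓ).natAbs
        = ∑ j ∈ ((Icc 1 L).filter (fun ℓ => ¬ ℓ ≤ k)).image (fun ℓ => ℓ - k), a ^ j := by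
      rw [Finset.sum_image (fun x hx y hy hxy => by
        simp only [Finset.mem_coe, mem_filter, mem_Icc] at hx hy; omega)]
      exact Finset.sum_congr rfl fun ℓ hℓ => by
        simp only [mem_filter, mem_Icc] at hℓ; congr 1; omega
    rw [e2]
    refine le_trans (Finset.sum_le_sum_of_subset_of_nonneg ?_
      (fun i _ _ => pow_nonneg h0 i)) (geomAux h0 h1 (L + 1))
    intro j hj
    simp only [Finset.mem_image, mem_filter, mem_Icc] at hj
    simp only [Finset.mem_range]
    omega
  have : 1 / (1 - a) + 1 / (1 - a) = 2 / (1 - a) := by ring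
  linarith

lemma dsum_pow_le {a : ℝ} (h0 : 0 ≤ a) (h1 : a < 1) (K L : ℕ) :
    dsum (fun d => a ^ d) K L ≤ K * (2 / (1 - a)) := by
  unfold dsum
  calc ∑ k ∈ Icc 1 K, ∑ ℓ ∈ Icc 1 L, a ^ ((k : ℤ) - ℓ).natAbs
      ≤ ∑ _k ∈ Icc 1 K, 2 / (1 - a) :=
        Finset.sum_le_sum fun k _ => inner_geom_le h0 h1 k L
    _ = K * (2 / (1 - a)) := by
        rw [Finset.sum_const, Nat.card_Icc, nsmul_eq_mul]; norm_num

lemma Hsum_le (M : ℕ) : ∑ j ∈ Icc 1 M, (1 : ℝ) / j ≤ 1 + Real.log M := by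
  have h := harmonic_le_one_add_log M
  rw [harmonic_eq_sum_Icc] at h
  push_cast at h
  simpa [one_div] using h

lemma log_le_Hsum (M : ℕ) : Real.log (M + 1) ≤ ∑ j ∈ Icc 1 M, (1 : ℝ) / j := by
  have h := log_add_one_le_harmonic M
  rw [harmonic_eq_sum_Icc] at h
  push_cast at h
  simpa [one_div] using h

lemma inner_harm_le (k M : ℕ) (hk1 : 1 ≤ k) (hkM : k ≤ M) :
    ∑ ℓ ∈ Icc 1 M, (1 : ℝ) / (((k : ℤ) - ℓ).natAbs + 1) ≤ 2 * (1 + Real.log M) := by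
  classical
  rw [← Finset.sum_filter_add_sum_filter_not (Icc 1 M) (fun ℓ => ℓ ≤ k)]
  have b1 : ∑ ℓ ∈ (Icc 1 M).filter (fun ℓ => ℓ ≤ k), (1 : ℝ) / (((k : ℤ) - ℓ).natAbs + 1)
      ≤ 1 + Real.log M := by
    have e1 : ∑ ℓ ∈ (Icc 1 M).filter (fun ℓ => ℓ ≤ k), (1 : ℝ) / (((k : ℤ) - ℓ).natAbs + 1)
        = ∑ j ∈ ((Icc 1 M).filter (fun ℓ => ℓ ≤ k)).image (fun ℓ => k - ℓ + 1), (1 : ℝ) / j := by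
      rw [Finset.sum_image (fun x hx y hy hxy => by
        simp only [Finset.mem_coe, mem_filter, mem_Icc] at hx hy; omega)]
      refine Finset.sum_congr rfl fun ℓ hℓ => ?_
      simp only [mem_filter, mem_Icc] at hℓ
      have h1 : ((k : ℤ) - ℓ).natAbs = k - ℓ := by omega
      rw [h1]
      have h2 : ((k - ℓ : ℕ) : ℝ) + 1 = ((k - ℓ + 1 : ℕ) : ℝ) := by push_cast; ring
      rw [h2]
    rw [e1]
    refine le_trans (Finset.sum_le_sum_of_subset_of_nonneg ?_
      (fun i _ _ => by positivity)) (Hsum_le M)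
    intro j hj
    simp only [Finset.mem_image, mem_filter, mem_Icc] at hj
    simp only [mem_Icc]
    omega
  have b2 : ∑ ℓ ∈ (Icc 1 M).filter (fun ℓ => ¬ ℓ ≤ k), (1 : ℝ) / (((k : ℤ) - ℓ).natAbs + 1)
      ≤ 1 + Real.log M := by
    have e2 : ∑ ℓ ∈ (Icc 1 M).filter (fun ℓ => ¬ ℓ ≤ k), (1 : ℝ) / (((k : ℤ) - ℓ).natAbs + 1)
        = ∑ j ∈ ((Icc 1 M).filter (fun ℓ => ¬ ℓ ≤ k)).image (fun ℓ => ℓ - k + 1), (1 : ℝ) / j := by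
      rw [Finset.sum_image (fun x hx y hy hxy => by
        simp only [Finset.mem_coe, mem_filter, mem_Icc] at hx hy; omega)]
      refine Finset.sum_congr rfl fun ℓ hℓ => ?_
      simp only [mem_filter, mem_Icc] at hℓ
      have h1 : ((k : ℤ) - ℓ).natAbs = ℓ - k := by omega
      rw [h1]
      have h2 : ((ℓ - k : ℕ) : ℝ) + 1 = ((ℓ - k + 1 : ℕ) : ℝ) := by push_cast; ring
      rw [h2]
    rw [e2]
    refine le_trans (Finset.sum_le_sum_of_subset_of_nonneg ?_
      (fun i _ _ => by positivity)) (Hsum_le M)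
    intro j hj
    simp only [Finset.mem_image, mem_filter, mem_Icc] at hj
    simp only [mem_Icc]
    omega
  linarith

lemma dsum_harm_le (K L : ℕ) (hKL : K ≤ L) :
    dsum (fun d => (1 : ℝ) / (d + 1)) K L ≤ K * (2 * (1 + Real.log L)) := by
  unfold dsum
  calc ∑ k ∈ Icc 1 K, ∑ ℓ ∈ Icc 1 L, (1 : ℝ) / ((((k : ℤ) - ℓ).natAbs : ℝ) + 1)
      ≤ ∑ k ∈ Icc 1 K, 2 * (1 + Real.log L) := by
        refine Finset.sum_le_sum fun k hk => ?_
        simp only [mem_Icc] at hk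
        exact inner_harm_le k L hk.1 (hk.2.trans hKL)
    _ = K * (2 * (1 + Real.log L)) := by
        rw [Finset.sum_const, Nat.card_Icc, nsmul_eq_mul]; norm_num

lemma part1_lower (k : ℕ) (hk : 1 ≤ k) :
    Real.log (k + 1) ≤ ∑ ℓ ∈ Icc 1 k, (1 : ℝ) / (((k : ℤ) - ℓ).natAbs + 1) := by
  classical
  have e1 : ∑ ℓ ∈ Icc 1 k, (1 : ℝ) / (((k : ℤ) - ℓ).natAbs + 1)
      = ∑ j ∈ (Icc 1 k).image (fun ℓ => k - ℓ + 1), (1 : ℝ) / j := by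
    rw [Finset.sum_image (fun x hx y hy hxy => by simp only [Finset.mem_coe, mem_Icc] at hx hy; omega)]
    refine Finset.sum_congr rfl fun ℓ hℓ => ?_
    simp only [mem_Icc] at hℓ
    have h1 : ((k : ℤ) - ℓ).natAbs = k - ℓ := by omega
    rw [h1]
    have h2 : ((k - ℓ : ℕ) : ℝ) + 1 = ((k - ℓ + 1 : ℕ) : ℝ) := by push_cast; ring
    rw [h2]
  rw [e1]
  have hc : (((k : ℕ) : ℝ) + 1) = (((k + 1 : ℕ) : ℕ) : ℝ) := by push_cast; ring
  refine le_trans (log_le_Hsum k) ?_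
  refine Finset.sum_le_sum_of_subset_of_nonneg ?_ (fun i _ _ => by positivity)
  intro j hj
  simp only [mem_Icc] at hj
  simp only [Finset.mem_image, mem_Icc]
  exact ⟨k - j + 1, by omega, by omega⟩

lemma part2_lower (k m : ℕ) (hk : 1 ≤ k) (hkm : k ≤ m) :
    Real.log ((m - k + 1 : ℕ)) - 1 ≤ ∑ ℓ ∈ Ioc k m, (1 : ℝ) / (((k : ℤ) - ℓ).natAbs + 1) := by
  classical
  set r := m - k with hr
  have e1 : ∑ ℓ ∈ Ioc k m, (1 : ℝ) / (((k : ℤ) - ℓ).natAbs + 1)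
      = ∑ j ∈ (Ioc k m).image (fun ℓ => ℓ - k + 1), (1 : ℝ) / j := by
    rw [Finset.sum_image (fun x hx y hy hxy => by simp only [Finset.mem_coe, mem_Ioc] at hx hy; omega)]
    refine Finset.sum_congr rfl fun ℓ hℓ => ?_
    simp only [mem_Ioc] at hℓ
    have h1 : ((k : ℤ) - ℓ).natAbs = ℓ - k := by omega
    rw [h1]
    have h2 : ((ℓ - k : ℕ) : ℝ) + 1 = ((ℓ - k + 1 : ℕ) : ℝ) := by push_cast; ring
    rw [h2]
  rw [e1]
  have hins : Icc 1 (r + 1) = insert 1 (Icc 2 (r + 1)) := by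
    ext x; simp only [mem_Icc, Finset.mem_insert]; omega
  have hH : ∑ j ∈ Icc 1 (r + 1), (1 : ℝ) / j = 1 + ∑ j ∈ Icc 2 (r + 1), (1 : ℝ) / j := by
    rw [hins, Finset.sum_insert (by simp)]
    norm_num
  have h2 : ∑ j ∈ Icc 2 (r + 1), (1 : ℝ) / j
      ≤ ∑ j ∈ (Ioc k m).image (fun ℓ => ℓ - k + 1), (1 : ℝ) / j := by
    refine Finset.sum_le_sum_of_subset_of_nonneg ?_ (fun i _ _ => by positivity)
    intro j hj
    simp only [mem_Icc] at hj
    simp only [Finset.mem_image, mem_Ioc]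
    exact ⟨k + j - 1, by omega, by omega⟩
  have h3 : Real.log ((r + 1 : ℕ)) ≤ Real.log ((r + 1 : ℕ) + 1) := by
    apply Real.log_le_log (by positivity)
    linarith
  have h4 := log_le_Hsum (r + 1)
  push_cast at h3 h4 ⊢
  linarith

lemma log_sum_lower (m : ℕ) :
    (m : ℝ) * Real.log m - m ≤ ∑ k ∈ Icc 1 m, Real.log k := by
  rcases Nat.eq_zero_or_pos m with h | h
  · simp [h]
  have hfact : ∑ k ∈ Icc 1 m, Real.log k = Real.log (Nat.factorial m) := by
    rw [← Real.log_prod (s := Icc 1 m) (f := fun k : ℕ => (k : ℝ)) (fun k hk => by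
      simp only [mem_Icc] at hk
      exact Nat.cast_ne_zero.mpr (by omega))]
    · congr 1
      rw [← Nat.cast_prod]
      congr 1
      rw [← Finset.Ico_add_one_right_eq_Icc, Finset.prod_Ico_id_eq_factorial m]
  have hfacpos : (0 : ℝ) < (Nat.factorial m : ℝ) := by exact_mod_cast Nat.factorial_pos m
  have h1 : (m : ℝ) ^ m / (Nat.factorial m : ℝ) ≤ ∑ i ∈ range (m + 1), (m : ℝ) ^ i / (Nat.factorial i : ℝ) := by
    refine Finset.single_le_sum (f := fun i => (m : ℝ) ^ i / (Nat.factorial i : ℝ))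
      (fun i _ => by positivity) (by simp)
  have h2 := Real.sum_le_exp_of_nonneg (x := (m : ℝ)) (Nat.cast_nonneg m) (m + 1)
  have hexp : (m : ℝ) ^ m ≤ Real.exp m * (Nat.factorial m : ℝ) := by
    have := mul_le_mul_of_nonneg_right (h1.trans h2) hfacpos.le
    calc (m : ℝ) ^ m = ((m : ℝ) ^ m / (Nat.factorial m : ℝ)) * (Nat.factorial m : ℝ) := by field_simp
      _ ≤ Real.exp m * (Nat.factorial m : ℝ) := this
  have hlog := Real.log_le_log (by positivity) hexp
  rw [Real.log_pow, Real.log_mul (Real.exp_ne_zero _) (by positivity), Real.log_exp] at hlog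
  rw [hfact]
  linarith

lemma square_lower (m : ℕ) (hm : 1 ≤ m) :
    2 * (m : ℝ) * Real.log m - 3 * m ≤ dsum (fun d => (1 : ℝ) / (d + 1)) m m := by
  classical
  unfold dsum
  have key : ∀ k ∈ Icc 1 m,
      Real.log (k + 1) + (Real.log ((m - k + 1 : ℕ)) - 1)
        ≤ ∑ ℓ ∈ Icc 1 m, (1 : ℝ) / ((((k : ℤ) - ℓ).natAbs : ℝ) + 1) := by
    intro k hk
    simp only [mem_Icc] at hk
    have hsplit : Icc 1 m = Icc 1 k ∪ Ioc k m := by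
      ext x; simp only [mem_Icc, Finset.mem_union, mem_Ioc]; omega
    have hdisj : Disjoint (Icc 1 k) (Ioc k m) := by
      rw [Finset.disjoint_left]
      intro x hx hx'
      simp only [mem_Icc] at hx
      simp only [mem_Ioc] at hx'
      omega
    rw [hsplit, Finset.sum_union hdisj]
    exact add_le_add (part1_lower k hk.1) (part2_lower k m hk.1 hk.2)
  have step1 : ∑ k ∈ Icc 1 m, (Real.log (k + 1) + (Real.log ((m - k + 1 : ℕ)) - 1))
      ≤ ∑ k ∈ Icc 1 m, ∑ ℓ ∈ Icc 1 m, (1 : ℝ) / ((((k : ℤ) - ℓ).natAbs : ℝ) + 1) :=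
    Finset.sum_le_sum key
  have e1 : ∑ k ∈ Icc 1 m, (Real.log (k + 1) + (Real.log ((m - k + 1 : ℕ)) - 1))
      = ∑ k ∈ Icc 1 m, Real.log (k + 1) + ∑ k ∈ Icc 1 m, Real.log ((m - k + 1 : ℕ)) - m := by
    rw [Finset.sum_add_distrib, Finset.sum_sub_distrib, Finset.sum_const, Nat.card_Icc,
      nsmul_eq_mul]
    push_cast
    ring
  have b1 : ∑ k ∈ Icc 1 m, Real.log k ≤ ∑ k ∈ Icc 1 m, Real.log (k + 1) := by
    refine Finset.sum_le_sum fun k hk => ?_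
    simp only [mem_Icc] at hk
    exact Real.log_le_log (by exact_mod_cast hk.1) (by linarith)
  have b2 : ∑ k ∈ Icc 1 m, Real.log k ≤ ∑ k ∈ Icc 1 m, Real.log ((m - k + 1 : ℕ)) := by
    have e2 : ∑ k ∈ Icc 1 m, Real.log ((m - k + 1 : ℕ))
        = ∑ j ∈ (Icc 1 m).image (fun k => m - k + 1), Real.log j := by
      rw [Finset.sum_image (fun x hx y hy hxy => by simp only [Finset.mem_coe, mem_Icc] at hx hy; omega)]
    rw [e2]
    refine Finset.sum_le_sum_of_subset_of_nonneg ?_ ?_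
    · intro j hj
      simp only [mem_Icc] at hj
      simp only [Finset.mem_image, mem_Icc]
      exact ⟨m - j + 1, by omega, by omega⟩
    · intro i hi _
      simp only [Finset.mem_image, mem_Icc] at hi
      obtain ⟨ℓ, hℓ, rfl⟩ := hi
      refine Real.log_nonneg ?_
      have : 1 ≤ m - ℓ + 1 := by omega
      exact_mod_cast this
  have b3 := log_sum_lower m
  linarith

lemma dsum_harm_lower (K L : ℕ) (hK : 1 ≤ K) (hKL : K ≤ L) :
    2 * (K : ℝ) * Real.log K - 3 * K ≤ dsum (fun d => (1 : ℝ) / (d + 1)) K L := by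
  refine le_trans (square_lower K hK) ?_
  unfold dsum
  refine Finset.sum_le_sum fun k _ => ?_
  refine Finset.sum_le_sum_of_subset_of_nonneg ?_ (fun i _ _ => by positivity)
  exact Finset.Icc_subset_Icc le_rfl hKL

open MeasureTheory

lemma dsum_pow_continuous (K L : ℕ) : Continuous fun a : ℝ => dsum (fun d => a ^ d) K L := by
  unfold dsum
  exact continuous_finset_sum _ fun k _ => continuous_finset_sum _ fun ℓ _ => continuous_pow _

lemma dsum_pow_nonneg {a : ℝ} (h0 : 0 ≤ a) (K L : ℕ) : 0 ≤ dsum (fun d => a ^ d) K L :=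
  Finset.sum_nonneg fun _ _ => Finset.sum_nonneg fun _ _ => pow_nonneg h0 _

lemma dsum_pow_le_card {a : ℝ} (h0 : 0 ≤ a) (h1 : a ≤ 1) (K L : ℕ) :
    dsum (fun d => a ^ d) K L ≤ (K : ℝ) * L := by
  unfold dsum
  calc ∑ k ∈ Icc 1 K, ∑ ℓ ∈ Icc 1 L, a ^ ((k : ℤ) - ℓ).natAbs
      ≤ ∑ _k ∈ Icc 1 K, ∑ _ℓ ∈ Icc 1 L, (1 : ℝ) :=
        Finset.sum_le_sum fun k _ => Finset.sum_le_sum fun ℓ _ => pow_le_one₀ h0 h1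
    _ ≤ (K : ℝ) * L := by
        simp only [Finset.sum_const, Nat.card_Icc, nsmul_eq_mul, mul_one]
        norm_num

lemma integral_dsum_pow (K L : ℕ) :
    ∫ a in Set.Icc (0 : ℝ) 1, dsum (fun d => a ^ d) K L
      = dsum (fun d => (1 : ℝ) / (d + 1)) K L := by
  unfold dsum
  rw [MeasureTheory.integral_finset_sum _ (fun k _ =>
    ((continuous_finset_sum _ fun ℓ _ => continuous_pow _).integrableOn_Icc))]
  refine Finset.sum_congr rfl fun k _ => ?_
  rw [MeasureTheory.integral_finset_sum _ (fun ℓ _ => (continuous_pow _).integrableOn_Icc)]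
  refine Finset.sum_congr rfl fun ℓ _ => ?_
  rw [MeasureTheory.integral_Icc_eq_integral_Ioc,
    ← intervalIntegral.integral_of_le (zero_le_one), integral_pow]
  norm_num

lemma integral_bounds (ψ : ℝ → ℝ) (ψ₁ ε δ : ℝ)
    (hnonneg : ∀ x ∈ Set.Ico (0 : ℝ) 1, 0 ≤ ψ x)
    (hint : IntegrableOn ψ (Set.Ico (0 : ℝ) 1))
    (hε0 : 0 ≤ ε) (hδ0 : 0 < δ) (hδ1 : δ ≤ 1)
    (hψnear : ∀ x ∈ Set.Ioo (1 - δ) 1, |ψ x - ψ₁| ≤ ε)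
    (hψε : 0 ≤ ψ₁ - ε) (K L : ℕ) :
    (ψ₁ - ε) * (dsum (fun d => (1 : ℝ) / (d + 1)) K L - 2 * K / δ)
        ≤ (∫ a in Set.Icc (0 : ℝ) 1, dsum (fun d => a ^ d) K L * ψ a)
    ∧ (∫ a in Set.Icc (0 : ℝ) 1, dsum (fun d => a ^ d) K L * ψ a)
        ≤ 2 * K / δ * (∫ x in Set.Ico (0 : ℝ) 1, ψ x)
          + (ψ₁ + ε) * dsum (fun d => (1 : ℝ) / (d + 1)) K L := by
  have h01 : (0 : ℝ) ≤ 1 - δ := by linarith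
  have h11 : (1 : ℝ) - δ ≤ 1 := by linarith
  have hKδ : (0 : ℝ) ≤ 2 * K / δ := by positivity
  have hψIcc : IntegrableOn ψ (Set.Icc (0 : ℝ) 1) :=
    hint.congr_set_ae (MeasureTheory.Ico_ae_eq_Icc (μ := volume) (a := (0:ℝ)) (b := 1)).symm
  have hTint : IntegrableOn (fun a : ℝ => dsum (fun d => a ^ d) K L) (Set.Icc (0 : ℝ) 1) :=
    (dsum_pow_continuous K L).integrableOn_Icc
  have hTψint : IntegrableOn (fun a : ℝ => dsum (fun d => a ^ d) K L * ψ a)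
      (Set.Icc (0 : ℝ) 1) := by
    refine Integrable.bdd_mul (c := (K : ℝ) * L) hψIcc
      (dsum_pow_continuous K L).aestronglyMeasurable ?_
    filter_upwards [MeasureTheory.ae_restrict_mem measurableSet_Icc] with a ha
    rw [Real.norm_eq_abs, abs_of_nonneg (dsum_pow_nonneg ha.1 K L)]
    exact dsum_pow_le_card ha.1 ha.2 K L
  have hsub1 : Set.Icc (0 : ℝ) (1 - δ) ⊆ Set.Icc 0 1 := Set.Icc_subset_Icc_right h11
  have hsub2 : Set.Ioc (1 - δ) (1 : ℝ) ⊆ Set.Icc 0 1 := fun x hx => ⟨by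
      have := hx.1; linarith, hx.2⟩
  have hsub3 : Set.Ioo (1 - δ) (1 : ℝ) ⊆ Set.Icc 0 1 := fun x hx =>
    hsub2 ⟨hx.1, hx.2.le⟩
  have hsub4 : Set.Icc (0 : ℝ) (1 - δ) ⊆ Set.Ico 0 1 := fun x hx =>
    ⟨hx.1, by have := hx.2; linarith⟩
  have hdisj : Disjoint (Set.Icc (0 : ℝ) (1 - δ)) (Set.Ioc (1 - δ) 1) :=
    (Set.Iic_disjoint_Ioc le_rfl).mono_left Set.Icc_subset_Iic_self
  have hsplit : ∀ f : ℝ → ℝ, IntegrableOn f (Set.Icc (0 : ℝ) 1) →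
      ∫ a in Set.Icc (0 : ℝ) 1, f a
        = (∫ a in Set.Icc (0 : ℝ) (1 - δ), f a) + ∫ a in Set.Ioc (1 - δ) (1 : ℝ), f a := by
    intro f hf
    rw [← Set.Icc_union_Ioc_eq_Icc h01 h11]
    exact MeasureTheory.setIntegral_union hdisj measurableSet_Ioc
      (hf.mono_set hsub1) (hf.mono_set hsub2)
  -- bound for T on [0, 1-δ]
  have hTbd : ∀ a ∈ Set.Icc (0 : ℝ) (1 - δ), dsum (fun d => a ^ d) K L ≤ 2 * K / δ := by
    intro a ha
    have ha1 : a < 1 := by have := ha.2; linarith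
    refine le_trans (dsum_pow_le ha.1 ha1 K L) ?_
    have h2 : 2 / (1 - a) ≤ 2 / δ :=
      div_le_div_of_nonneg_left (by norm_num) hδ0 (by have := ha.2; linarith)
    calc (K : ℝ) * (2 / (1 - a)) ≤ (K : ℝ) * (2 / δ) :=
          mul_le_mul_of_nonneg_left h2 (Nat.cast_nonneg K)
      _ = 2 * K / δ := by ring
  -- piece 1 for T ψ
  have e1 : ∫ a in Set.Icc (0 : ℝ) (1 - δ), dsum (fun d => a ^ d) K L * ψ a
      ≤ 2 * K / δ * ∫ x in Set.Ico (0 : ℝ) 1, ψ x := by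
    have step1 : ∫ a in Set.Icc (0 : ℝ) (1 - δ), dsum (fun d => a ^ d) K L * ψ a
        ≤ ∫ a in Set.Icc (0 : ℝ) (1 - δ), 2 * K / δ * ψ a := by
      refine setIntegral_mono_on (hTψint.mono_set hsub1)
        ((hint.mono_set hsub4).const_mul _) measurableSet_Icc ?_
      intro a ha
      exact mul_le_mul_of_nonneg_right (hTbd a ha) (hnonneg a (hsub4 ha))
    refine step1.trans ?_
    rw [MeasureTheory.integral_const_mul]
    refine mul_le_mul_of_nonneg_left ?_ hKδ
    refine setIntegral_mono_set hint ?_ (HasSubset.Subset.eventuallyLE hsub4)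
    exact (ae_restrict_iff' measurableSet_Ico).mpr (Filter.Eventually.of_forall hnonneg)
  have e1low : 0 ≤ ∫ a in Set.Icc (0 : ℝ) (1 - δ), dsum (fun d => a ^ d) K L * ψ a :=
    setIntegral_nonneg measurableSet_Icc fun a ha =>
      mul_nonneg (dsum_pow_nonneg ha.1 K L) (hnonneg a (hsub4 ha))
  -- T nonneg a.e. on Icc 0 1
  have hTae : 0 ≤ᵐ[volume.restrict (Set.Icc (0 : ℝ) 1)] fun a => dsum (fun d => a ^ d) K L := by
    filter_upwards [MeasureTheory.ae_restrict_mem measurableSet_Icc] with a ha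
    exact dsum_pow_nonneg ha.1 K L
  -- piece bounds on (1-δ, 1]
  have hIooIoc : ∀ f : ℝ → ℝ, (∫ a in Set.Ioc (1 - δ) (1 : ℝ), f a)
      = ∫ a in Set.Ioo (1 - δ) (1 : ℝ), f a := fun f =>
    MeasureTheory.integral_Ioc_eq_integral_Ioo
  have e5 : ∫ a in Set.Icc (0 : ℝ) (1 - δ), dsum (fun d => a ^ d) K L ≤ 2 * K / δ := by
    have step1 : ∫ a in Set.Icc (0 : ℝ) (1 - δ), dsum (fun d => a ^ d) K L
        ≤ ∫ _a in Set.Icc (0 : ℝ) (1 - δ), 2 * K / δ :=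
      setIntegral_mono_on (hTint.mono_set hsub1) ((integrableOn_const_iff).mpr (Or.inr (by
        rw [Real.volume_Icc]; exact ENNReal.ofReal_lt_top))) measurableSet_Icc hTbd
    refine step1.trans ?_
    rw [MeasureTheory.setIntegral_const, smul_eq_mul, Real.volume_real_Icc_of_le (by linarith)]
    nlinarith
  have hIooT : ∫ a in Set.Ioo (1 - δ) (1 : ℝ), dsum (fun d => a ^ d) K L
      = dsum (fun d => (1 : ℝ) / (d + 1)) K L
        - ∫ a in Set.Icc (0 : ℝ) (1 - δ), dsum (fun d => a ^ d) K L := by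
    rw [← hIooIoc, ← integral_dsum_pow K L, hsplit _ hTint]
    ring
  -- upper estimate on (1-δ,1]
  have e3 : ∫ a in Set.Ioc (1 - δ) (1 : ℝ), dsum (fun d => a ^ d) K L * ψ a
      ≤ (ψ₁ + ε) * dsum (fun d => (1 : ℝ) / (d + 1)) K L := by
    rw [hIooIoc]
    have step1 : ∫ a in Set.Ioo (1 - δ) (1 : ℝ), dsum (fun d => a ^ d) K L * ψ a
        ≤ ∫ a in Set.Ioo (1 - δ) (1 : ℝ), (ψ₁ + ε) * dsum (fun d => a ^ d) K L := by
      refine setIntegral_mono_on (hTψint.mono_set hsub3)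
        ((hTint.mono_set hsub3).const_mul _) measurableSet_Ioo ?_
      intro a ha
      have hψa : ψ a ≤ ψ₁ + ε := by
        have := abs_le.mp (hψnear a ha); linarith [this.2]
      have hT0 : 0 ≤ dsum (fun d => a ^ d) K L :=
        dsum_pow_nonneg (le_trans h01 ha.1.le) K L
      calc dsum (fun d => a ^ d) K L * ψ a ≤ dsum (fun d => a ^ d) K L * (ψ₁ + ε) :=
            mul_le_mul_of_nonneg_left hψa hT0
        _ = (ψ₁ + ε) * dsum (fun d => a ^ d) K L := by ring
    refine step1.trans ?_
    rw [MeasureTheory.integral_const_mul]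
    refine mul_le_mul_of_nonneg_left ?_ (by linarith)
    rw [← integral_dsum_pow K L]
    exact setIntegral_mono_set hTint hTae (HasSubset.Subset.eventuallyLE hsub3)
  -- lower estimate on (1-δ,1]
  have e4 : (ψ₁ - ε) * (dsum (fun d => (1 : ℝ) / (d + 1)) K L - 2 * K / δ)
      ≤ ∫ a in Set.Ioc (1 - δ) (1 : ℝ), dsum (fun d => a ^ d) K L * ψ a := by
    rw [hIooIoc]
    have step1 : ∫ a in Set.Ioo (1 - δ) (1 : ℝ), (ψ₁ - ε) * dsum (fun d => a ^ d) K L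
        ≤ ∫ a in Set.Ioo (1 - δ) (1 : ℝ), dsum (fun d => a ^ d) K L * ψ a := by
      refine setIntegral_mono_on ((hTint.mono_set hsub3).const_mul _)
        (hTψint.mono_set hsub3) measurableSet_Ioo ?_
      intro a ha
      have hψa : ψ₁ - ε ≤ ψ a := by
        have := abs_le.mp (hψnear a ha); linarith [this.1]
      have hT0 : 0 ≤ dsum (fun d => a ^ d) K L :=
        dsum_pow_nonneg (le_trans h01 ha.1.le) K L
      calc (ψ₁ - ε) * dsum (fun d => a ^ d) K L
          = dsum (fun d => a ^ d) K L * (ψ₁ - ε) := by ring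
        _ ≤ dsum (fun d => a ^ d) K L * ψ a := mul_le_mul_of_nonneg_left hψa hT0
    refine le_trans ?_ step1
    rw [MeasureTheory.integral_const_mul, hIooT]
    refine mul_le_mul_of_nonneg_left ?_ hψε
    have := e5
    linarith
  constructor
  · rw [hsplit _ hTψint]
    linarith
  · rw [hsplit _ hTψint]
    linarith

open Filter

lemma floor_div_tendsto {t : ℝ} (ht : 0 < t) :
    Tendsto (fun n : ℕ => (⌊(n : ℝ) * t⌋₊ : ℝ) / n) atTop (nhds t) := by
  have h := (tendsto_nat_floor_mul_div_atTop (R := ℝ) (a := t) ht.le).comp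
    (tendsto_natCast_atTop_atTop (R := ℝ))
  simpa [Function.comp_def, mul_comm] using h

lemma floor_tendsto_atTop {t : ℝ} (ht : 0 < t) :
    Tendsto (fun n : ℕ => ⌊(n : ℝ) * t⌋₊) atTop atTop := by
  have := tendsto_nat_floor_mul_atTop (α := ℝ) t ht
  simpa [mul_comm] using this

lemma log_nat_tendsto : Tendsto (fun n : ℕ => Real.log n) atTop atTop :=
  Real.tendsto_log_atTop.comp tendsto_natCast_atTop_atTop

lemma inv_log_tendsto : Tendsto (fun n : ℕ => (Real.log n)⁻¹) atTop (nhds 0) :=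
  log_nat_tendsto.inv_tendsto_atTop

lemma log_ratio_tendsto {c : ℝ} (hc : 0 < c) (g : ℕ → ℕ)
    (hg : Tendsto (fun n => (g n : ℝ) / n) atTop (nhds c))
    (hg1 : ∀ᶠ n : ℕ in atTop, 1 ≤ g n) :
    Tendsto (fun n => Real.log (g n) / Real.log n) atTop (nhds 1) := by
  have hlograt : Tendsto (fun n : ℕ => Real.log ((g n : ℝ) / n)) atTop (nhds (Real.log c)) :=
    (Real.continuousAt_log hc.ne').tendsto.comp hg
  have hmain : Tendsto (fun n : ℕ => Real.log ((g n : ℝ) / n) * (Real.log n)⁻¹ + 1)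
      atTop (nhds (Real.log c * 0 + 1)) := (hlograt.mul inv_log_tendsto).add tendsto_const_nhds
  rw [mul_zero, zero_add] at hmain
  refine hmain.congr' ?_
  filter_upwards [hg1, eventually_ge_atTop 2] with n hg1n hn2
  have hn0 : (0 : ℝ) < n := by
    have : (2 : ℝ) ≤ n := by exact_mod_cast hn2
    linarith
  have hgn0 : (0 : ℝ) < (g n : ℝ) := by exact_mod_cast hg1n
  have hlogn0 : Real.log n ≠ 0 := by
    have h1 : (1 : ℝ) < n := by
      have : (2 : ℝ) ≤ n := by exact_mod_cast hn2
      linarith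
    exact (Real.log_pos h1).ne'
  rw [Real.log_div hgn0.ne' hn0.ne']
  field_simp
  ring

lemma min_div_tendsto {t₁ t₂ : ℝ} (h1 : 0 < t₁) (h2 : 0 < t₂) :
    Tendsto (fun n : ℕ => ((min ⌊(n : ℝ) * t₁⌋₊ ⌊(n : ℝ) * t₂⌋₊ : ℕ) : ℝ) / n)
      atTop (nhds (min t₁ t₂)) := by
  have h := (floor_div_tendsto h1).min (floor_div_tendsto h2)
  refine h.congr' ?_
  filter_upwards with n
  rw [Nat.cast_min, ← min_div_div_right (Nat.cast_nonneg n)]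

lemma max_div_tendsto {t₁ t₂ : ℝ} (h1 : 0 < t₁) (h2 : 0 < t₂) :
    Tendsto (fun n : ℕ => ((max ⌊(n : ℝ) * t₁⌋₊ ⌊(n : ℝ) * t₂⌋₊ : ℕ) : ℝ) / n)
      atTop (nhds (max t₁ t₂)) := by
  have h := (floor_div_tendsto h1).max (floor_div_tendsto h2)
  refine h.congr' ?_
  filter_upwards with n
  rw [Nat.cast_max, ← max_div_div_right (Nat.cast_nonneg n)]

theorem integral_double_sum_psi_limit (ψ : ℝ → ℝ) (ψ₁ : ℝ) (hψ₁ : 0 < ψ₁)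
    (hnonneg : ∀ x ∈ Set.Ico (0 : ℝ) 1, 0 ≤ ψ x)
    (hint : IntegrableOn ψ (Set.Ico (0 : ℝ) 1))
    (hlim : Tendsto ψ (nhdsWithin 1 (Set.Iio 1)) (nhds ψ₁))
    (lam : ℝ) (hlam : 0 < lam)
    (t₁ t₂ : ℝ) (ht₁ : 0 < t₁) (ht₂ : 0 < t₂) :
    Tendsto (fun n : ℕ =>
      (lam / (n * Real.log n)) *
        ∫ a in Set.Icc (0 : ℝ) 1,
          ∑ k ∈ Finset.Icc 1 ⌊(n : ℝ) * t₁⌋₊, ∑ ℓ ∈ Finset.Icc 1 ⌊(n : ℝ) * t₂⌋₊,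
            a ^ (((k : ℤ) - ℓ).natAbs) * ψ a)
      atTop (nhds (2 * lam * ψ₁ * min t₁ t₂)) := by
  have hμpos : 0 < min t₁ t₂ := lt_min ht₁ ht₂
  have hMxpos : 0 < max t₁ t₂ := lt_of_lt_of_le ht₁ (le_max_left _ _)
  have hfun : ∀ n : ℕ, ∀ a : ℝ,
      (∑ k ∈ Finset.Icc 1 ⌊(n : ℝ) * t₁⌋₊, ∑ ℓ ∈ Finset.Icc 1 ⌊(n : ℝ) * t₂⌋₊,
        a ^ (((k : ℤ) - ℓ).natAbs) * ψ a)
      = dsum (fun d => a ^ d) ⌊(n : ℝ) * t₁⌋₊ ⌊(n : ℝ) * t₂⌋₊ * ψ a := by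
    intro n a
    simp [dsum, Finset.sum_mul]
  simp only [hfun]
  rw [Metric.tendsto_nhds]
  intro e he
  obtain ⟨ε, hε0, hεψ, hεe⟩ :
      ∃ ε : ℝ, 0 < ε ∧ ε ≤ ψ₁ / 2 ∧ 2 * lam * ε * min t₁ t₂ ≤ e / 2 := by
    have h2 : (0 : ℝ) < 1 + 8 * lam * min t₁ t₂ := by positivity
    refine ⟨min (ψ₁ / 2) (e / (1 + 8 * lam * min t₁ t₂)),
      lt_min (by linarith) (by positivity), min_le_left _ _, ?_⟩
    have hq0 : 0 < min (ψ₁ / 2) (e / (1 + 8 * lam * min t₁ t₂)) :=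
      lt_min (by linarith) (by positivity)
    have h1 : min (ψ₁ / 2) (e / (1 + 8 * lam * min t₁ t₂))
        ≤ e / (1 + 8 * lam * min t₁ t₂) := min_le_right _ _
    have h1' : min (ψ₁ / 2) (e / (1 + 8 * lam * min t₁ t₂)) * (1 + 8 * lam * min t₁ t₂) ≤ e := by
      rwa [← le_div_iff₀ h2]
    nlinarith [mul_pos (mul_pos hlam hμpos) hq0]
  have hball : {x : ℝ | |ψ x - ψ₁| ≤ ε} ∈ nhdsWithin 1 (Set.Iio 1) := by
    have h := hlim (Metric.closedBall_mem_nhds ψ₁ hε0)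
    refine Filter.mem_of_superset h fun x hx => ?_
    simpa [Metric.mem_closedBall, Real.dist_eq] using hx
  obtain ⟨a₀, ha₀, hsub⟩ := mem_nhdsLT_iff_exists_Ioo_subset.mp hball
  have ha₀1 : a₀ < 1 := ha₀
  set δ := min (1 - a₀) 1 with hδdef
  have hδ0 : 0 < δ := lt_min (by linarith) one_pos
  have hδ1 : δ ≤ 1 := min_le_right _ _
  have hψnear : ∀ x ∈ Set.Ioo (1 - δ) 1, |ψ x - ψ₁| ≤ ε := by
    intro x hx
    have h1 : a₀ ≤ 1 - δ := by
      have : δ ≤ 1 - a₀ := min_le_left _ _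
      linarith
    exact hsub ⟨lt_of_le_of_lt h1 hx.1, hx.2⟩
  have hψε : 0 ≤ ψ₁ - ε := by linarith
  -- eventual facts
  have hK1 : ∀ᶠ n : ℕ in atTop, 1 ≤ ⌊(n : ℝ) * t₁⌋₊ :=
    (floor_tendsto_atTop ht₁).eventually_ge_atTop 1
  have hL1 : ∀ᶠ n : ℕ in atTop, 1 ≤ ⌊(n : ℝ) * t₂⌋₊ :=
    (floor_tendsto_atTop ht₂).eventually_ge_atTop 1
  -- tendsto components
  have hKdiv := floor_div_tendsto ht₁
  have hmdiv := min_div_tendsto ht₁ ht₂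
  have hMdiv := max_div_tendsto ht₁ ht₂
  have hminev : ∀ᶠ n : ℕ in atTop, 1 ≤ min ⌊(n : ℝ) * t₁⌋₊ ⌊(n : ℝ) * t₂⌋₊ := by
    filter_upwards [hK1, hL1] with n h1 h2
    exact le_min h1 h2
  have hmaxev : ∀ᶠ n : ℕ in atTop, 1 ≤ max ⌊(n : ℝ) * t₁⌋₊ ⌊(n : ℝ) * t₂⌋₊ := by
    filter_upwards [hK1] with n h1
    exact le_max_of_le_left h1
  have hlogm := log_ratio_tendsto hμpos _ hmdiv hminev
  have hlogM := log_ratio_tendsto hMxpos _ hMdiv hmaxev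
  have hinv := inv_log_tendsto
  -- the two bounding sequences
  have hV : Tendsto (fun n : ℕ =>
      lam * ((ψ₁ - ε) *
        (2 * (((min ⌊(n : ℝ) * t₁⌋₊ ⌊(n : ℝ) * t₂⌋₊ : ℕ) : ℝ) / n) *
            (Real.log ((min ⌊(n : ℝ) * t₁⌋₊ ⌊(n : ℝ) * t₂⌋₊ : ℕ) : ℝ) / Real.log n)
          - 3 * (((min ⌊(n : ℝ) * t₁⌋₊ ⌊(n : ℝ) * t₂⌋₊ : ℕ) : ℝ) / n) * (Real.log n)⁻¹
          - 2 * ((⌊(n : ℝ) * t₁⌋₊ : ℝ) / n) / δ * (Real.log n)⁻¹)))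
      atTop (nhds (lam * ((ψ₁ - ε) *
        (2 * min t₁ t₂ * 1 - 3 * min t₁ t₂ * 0 - 2 * t₁ / δ * 0)))) := by
    refine tendsto_const_nhds.mul (tendsto_const_nhds.mul (Tendsto.sub (Tendsto.sub ?_ ?_) ?_))
    · exact (tendsto_const_nhds.mul hmdiv).mul hlogm
    · exact (tendsto_const_nhds.mul hmdiv).mul hinv
    · exact ((tendsto_const_nhds.mul hKdiv).div_const δ).mul hinv
  have hU : Tendsto (fun n : ℕ =>
      lam * (2 * ((⌊(n : ℝ) * t₁⌋₊ : ℝ) / n) / δ * (Real.log n)⁻¹ *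
          (∫ x in Set.Ico (0 : ℝ) 1, ψ x)
        + (ψ₁ + ε) * ((((min ⌊(n : ℝ) * t₁⌋₊ ⌊(n : ℝ) * t₂⌋₊ : ℕ) : ℝ) / n) *
            (2 * ((Real.log n)⁻¹ +
              Real.log ((max ⌊(n : ℝ) * t₁⌋₊ ⌊(n : ℝ) * t₂⌋₊ : ℕ) : ℝ) / Real.log n)))))
      atTop (nhds (lam * (2 * t₁ / δ * 0 * (∫ x in Set.Ico (0 : ℝ) 1, ψ x)
        + (ψ₁ + ε) * (min t₁ t₂ * (2 * (0 + 1)))))) := by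
    refine tendsto_const_nhds.mul (Tendsto.add ?_ ?_)
    · exact ((((tendsto_const_nhds.mul hKdiv).div_const δ).mul hinv).mul_const _)
    · exact tendsto_const_nhds.mul (hmdiv.mul (tendsto_const_nhds.mul (hinv.add hlogM)))
  rw [show lam * ((ψ₁ - ε) * (2 * min t₁ t₂ * 1 - 3 * min t₁ t₂ * 0 - 2 * t₁ / δ * 0))
      = 2 * lam * ψ₁ * min t₁ t₂ - 2 * lam * ε * min t₁ t₂ by ring] at hV
  rw [show lam * (2 * t₁ / δ * 0 * (∫ x in Set.Ico (0 : ℝ) 1, ψ x)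
      + (ψ₁ + ε) * (min t₁ t₂ * (2 * (0 + 1))))
      = 2 * lam * ψ₁ * min t₁ t₂ + 2 * lam * ε * min t₁ t₂ by ring] at hU
  -- eventual sandwich
  have key : ∀ᶠ n : ℕ in atTop,
      (lam * ((ψ₁ - ε) *
        (2 * (((min ⌊(n : ℝ) * t₁⌋₊ ⌊(n : ℝ) * t₂⌋₊ : ℕ) : ℝ) / n) *
            (Real.log ((min ⌊(n : ℝ) * t₁⌋₊ ⌊(n : ℝ) * t₂⌋₊ : ℕ) : ℝ) / Real.log n)
          - 3 * (((min ⌊(n : ℝ) * t₁⌋₊ ⌊(n : ℝ) * t₂⌋₊ : ℕ) : ℝ) / n) * (Real.log n)⁻¹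
          - 2 * ((⌊(n : ℝ) * t₁⌋₊ : ℝ) / n) / δ * (Real.log n)⁻¹)))
        ≤ lam / (n * Real.log n) *
          ∫ a in Set.Icc (0 : ℝ) 1, dsum (fun d => a ^ d) ⌊(n : ℝ) * t₁⌋₊ ⌊(n : ℝ) * t₂⌋₊ * ψ a
      ∧ lam / (n * Real.log n) *
          (∫ a in Set.Icc (0 : ℝ) 1, dsum (fun d => a ^ d) ⌊(n : ℝ) * t₁⌋₊ ⌊(n : ℝ) * t₂⌋₊ * ψ a)
        ≤ lam * (2 * ((⌊(n : ℝ) * t₁⌋₊ : ℝ) / n) / δ * (Real.log n)⁻¹ *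
            (∫ x in Set.Ico (0 : ℝ) 1, ψ x)
          + (ψ₁ + ε) * ((((min ⌊(n : ℝ) * t₁⌋₊ ⌊(n : ℝ) * t₂⌋₊ : ℕ) : ℝ) / n) *
              (2 * ((Real.log n)⁻¹ +
                Real.log ((max ⌊(n : ℝ) * t₁⌋₊ ⌊(n : ℝ) * t₂⌋₊ : ℕ) : ℝ) / Real.log n)))) := by
    filter_upwards [hK1, hL1, eventually_ge_atTop 2] with n hK1n hL1n hn2
    set K := ⌊(n : ℝ) * t₁⌋₊ with hKdef
    set L := ⌊(n : ℝ) * t₂⌋₊ with hLdef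
    have hn2' : (2 : ℝ) ≤ n := by exact_mod_cast hn2
    have hn0 : (0 : ℝ) < n := by linarith
    have hlogn : 0 < Real.log n := Real.log_pos (by linarith)
    have hc0 : 0 ≤ lam / (n * Real.log n) := by positivity
    obtain ⟨hlow, hup⟩ :=
      integral_bounds ψ ψ₁ ε δ hnonneg hint hε0.le hδ0 hδ1 hψnear hψε K L
    have hm1 : 1 ≤ min K L := le_min hK1n hL1n
    have hDlow : 2 * ((min K L : ℕ) : ℝ) * Real.log ((min K L : ℕ) : ℝ)
        - 3 * ((min K L : ℕ) : ℝ) ≤ dsum (fun d => (1 : ℝ) / (d + 1)) K L := by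
      rcases le_total K L with h | h
      · rw [min_eq_left h]; exact dsum_harm_lower K L hK1n h
      · rw [min_eq_right h, dsum_comm]; exact dsum_harm_lower L K hL1n h
    have hDhigh : dsum (fun d => (1 : ℝ) / (d + 1)) K L
        ≤ ((min K L : ℕ) : ℝ) * (2 * (1 + Real.log ((max K L : ℕ) : ℝ))) := by
      rcases le_total K L with h | h
      · rw [min_eq_left h, max_eq_right h]; exact dsum_harm_le K L h
      · rw [min_eq_right h, max_eq_left h, dsum_comm]; exact dsum_harm_le L K h
    constructor
    · have step1 : (ψ₁ - ε) * (2 * ((min K L : ℕ) : ℝ) * Real.log ((min K L : ℕ) : ℝ)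
          - 3 * ((min K L : ℕ) : ℝ) - 2 * K / δ)
          ≤ (ψ₁ - ε) * (dsum (fun d => (1 : ℝ) / (d + 1)) K L - 2 * K / δ) :=
        mul_le_mul_of_nonneg_left (by linarith) hψε
      have step3 := mul_le_mul_of_nonneg_left (step1.trans hlow) hc0
      refine le_trans (le_of_eq ?_) step3
      field_simp
    · have step1 : (ψ₁ + ε) * dsum (fun d => (1 : ℝ) / (d + 1)) K L
          ≤ (ψ₁ + ε) * (((min K L : ℕ) : ℝ) * (2 * (1 + Real.log ((max K L : ℕ) : ℝ)))) :=
        mul_le_mul_of_nonneg_left hDhigh (by linarith)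
      have step2 : (∫ a in Set.Icc (0 : ℝ) 1, dsum (fun d => a ^ d) K L * ψ a)
          ≤ 2 * K / δ * (∫ x in Set.Ico (0 : ℝ) 1, ψ x)
            + (ψ₁ + ε) * (((min K L : ℕ) : ℝ) * (2 * (1 + Real.log ((max K L : ℕ) : ℝ)))) :=
        hup.trans (by linarith)
      have step3 := mul_le_mul_of_nonneg_left step2 hc0
      refine step3.trans (le_of_eq ?_)
      field_simp
  have hVev : ∀ᶠ n : ℕ in atTop,
      2 * lam * ψ₁ * min t₁ t₂ - e
        < lam * ((ψ₁ - ε) *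
          (2 * (((min ⌊(n : ℝ) * t₁⌋₊ ⌊(n : ℝ) * t₂⌋₊ : ℕ) : ℝ) / n) *
              (Real.log ((min ⌊(n : ℝ) * t₁⌋₊ ⌊(n : ℝ) * t₂⌋₊ : ℕ) : ℝ) / Real.log n)
            - 3 * (((min ⌊(n : ℝ) * t₁⌋₊ ⌊(n : ℝ) * t₂⌋₊ : ℕ) : ℝ) / n) * (Real.log n)⁻¹
            - 2 * ((⌊(n : ℝ) * t₁⌋₊ : ℝ) / n) / δ * (Real.log n)⁻¹)) := by
    apply hV.eventually_const_lt
    have h1 : 2 * lam * ε * min t₁ t₂ ≥ 0 := by positivity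
    linarith
  have hUev : ∀ᶠ n : ℕ in atTop,
      lam * (2 * ((⌊(n : ℝ) * t₁⌋₊ : ℝ) / n) / δ * (Real.log n)⁻¹ *
          (∫ x in Set.Ico (0 : ℝ) 1, ψ x)
        + (ψ₁ + ε) * ((((min ⌊(n : ℝ) * t₁⌋₊ ⌊(n : ℝ) * t₂⌋₊ : ℕ) : ℝ) / n) *
            (2 * ((Real.log n)⁻¹ +
              Real.log ((max ⌊(n : ℝ) * t₁⌋₊ ⌊(n : ℝ) * t₂⌋₊ : ℕ) : ℝ) / Real.log n))))
        < 2 * lam * ψ₁ * min t₁ t₂ + e := by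
    apply hU.eventually_lt_const
    linarith
  filter_upwards [key, hVev, hUev] with n hk hv hu
  rw [Real.dist_eq, abs_sub_lt_iff]
  exact ⟨by linarith [hk.2], by linarith [hk.1]⟩
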